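/- Let ∂ : C₁ → C₀ be a crossed module of Lie algebras. Form the semidirect product Lie algebra C₁ ⋊ C₀ with bracket [(a, x), (b, y)] = ([a,b] + x·b − y·a, [x,y]), and define ω₀(a, x) = (0, x), ω₁(a, x) = (0, ∂(a) + x). Then ω₀ and ω₁ are Lie algebra homomorphisms with ω₀∘ω₁ = ω₁, ω₁∘ω₀ = ω₀, and [ker ω₀, ker ω₁] = 0. -/

import Mathlib

/-- From a crossed module of Lie algebras `d : C₁ → C₀` (with action `ρ`),
the semidirect product `C₁ ⋊ C₀` with bracket
`[(a,x),(b,y)] = ([a,b] + x·b − y·a, [x,y])` and structural maps `ω₀(a,x) = (0,x)`,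
`ω₁(a,x) = (0, d a + x)` is a cat¹-Lie algebra: `ω₀, ω₁` are Lie algebra homomorphisms,
`ω₀ ∘ ω₁ = ω₁`, `ω₁ ∘ ω₀ = ω₀`, and `[ker ω₀, ker ω₁] = 0`. -/
theorem crossedModule_to_cat1Lie {R C₁ C₀ : Type*} [CommRing R]
    [LieRing C₁] [LieAlgebra R C₁] [LieRing C₀] [LieAlgebra R C₀]
    (d : C₁ →ₗ⁅R⁆ C₀) (ρ : C₀ →ₗ[R] C₁ →ₗ[R] C₁)
    (hmod : ∀ (x y : C₀) (a : C₁), ρ ⁅x, y⁆ a = ρ x (ρ y a) - ρ y (ρ x a))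
    (hder : ∀ (x : C₀) (a b : C₁), ρ x ⁅a, b⁆ = ⁅ρ x a, b⁆ + ⁅a, ρ x b⁆)
    (hd : ∀ (x : C₀) (a : C₁), d (ρ x a) = ⁅x, d a⁆)
    (hpe : ∀ a b : C₁, ρ (d a) b = ⁅a, b⁆)
    (br : C₁ × C₀ → C₁ × C₀ → C₁ × C₀)
    (hbr : br = fun p q => (⁅p.1, q.1⁆ + ρ p.2 q.1 - ρ q.2 p.1, ⁅p.2, q.2⁆))
    (ω₀ ω₁ : C₁ × C₀ → C₁ × C₀)
    (hω₀ : ω₀ = fun p => ((0 : C₁), p.2))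
    (hω₁ : ω₁ = fun p => ((0 : C₁), d p.1 + p.2)) :
    (∀ p q, ω₀ (p + q) = ω₀ p + ω₀ q) ∧
    (∀ (c : R) p, ω₀ (c • p) = c • ω₀ p) ∧
    (∀ p q, ω₀ (br p q) = br (ω₀ p) (ω₀ q)) ∧
    (∀ p q, ω₁ (p + q) = ω₁ p + ω₁ q) ∧
    (∀ (c : R) p, ω₁ (c • p) = c • ω₁ p) ∧
    (∀ p q, ω₁ (br p q) = br (ω₁ p) (ω₁ q)) ∧
    (∀ p, ω₀ (ω₁ p) = ω₁ p) ∧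
    (∀ p, ω₁ (ω₀ p) = ω₀ p) ∧
    (∀ p q, ω₀ p = 0 → ω₁ q = 0 → br p q = 0) := by
  subst hbr hω₀ hω₁
  refine ⟨fun p q => by simp, fun c p => by simp, fun p q => by simp,
    fun p q => by simp [Prod.add_def]; abel,
    fun c p => by simp [Prod.smul_def],
    fun p q => ?_, fun p => by simp, fun p => by simp, fun p q h0 h1 => ?_⟩
  · simp only [Prod.mk.injEq, map_add, map_sub, LieHom.map_lie, hd]
    constructor
    · simp
    · rw [← lie_skew q.2 (d p.1),
        lie_add, add_lie, add_lie]
      abel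
  · simp only [Prod.mk.injEq, Prod.mk_eq_zero] at h0 h1 ⊢
    obtain ⟨-, h0⟩ := h0
    obtain ⟨-, h1⟩ := h1
    have hq : q.2 = -d q.1 := eq_neg_of_add_eq_zero_right h1
    refine ⟨?_, by rw [h0]; simp⟩
    rw [h0, hq]
    simp only [map_zero, LinearMap.zero_apply, map_neg, LinearMap.neg_apply, hpe]
    rw [← lie_skew q.1 p.1]
    abel
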